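/- Let F be a field of characteristic p > 0 and β ∈ F^× not a p-th power. Let D' ⊆ P(1,1,p) be the curve in the weighted projective plane Proj F[X,Y,T] (deg X = deg Y = 1, deg T = p) defined by the irreducible homogeneous equation T^p − β(X^p − βY^p)^p = 0 of degree p². Then h⁰(O_{D'}) = 1 and h¹(O_{D'}) = (p³ − p² − 2p + 2)/2. In particular for p = 2, h⁰(O_{D'}) = h¹(O_{D'}) = 1. -/

import Mathlib

noncomputable section

set_option synthInstance.maxHeartbeats 400000
set_option maxHeartbeats 1000000

open MvPolynomial

/-- The affine equation of the peculiar curve `D' ⊆ P(1,1,p)` on the chart `Y ≠ 0`: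
`t^p − β(x^p − β)^p`, with `x = X 0`, `t = X 1`. -/
def qChartY (F : Type*) [Field F] (p : ℕ) (β : F) : MvPolynomial (Fin 2) F :=
  X 1 ^ p - C β * (X 0 ^ p - C β) ^ p

/-- The affine equation of `D'` on the chart `X ≠ 0`: `t'^p − β(1 − βx'^p)^p`,
with `x' = X 0`, `t' = X 1`. -/
def qChartX (F : Type*) [Field F] (p : ℕ) (β : F) : MvPolynomial (Fin 2) F :=
  X 1 ^ p - C β * (1 - C β * X 0 ^ p) ^ p

/-- The coordinate ring of `D' ∩ D₊(Y)`. -/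
def ChartY (F : Type*) [Field F] (p : ℕ) (β : F) : Type _ :=
  MvPolynomial (Fin 2) F ⧸ Ideal.span {qChartY F p β}

instance (F : Type*) [Field F] (p : ℕ) (β : F) : CommRing (ChartY F p β) :=
  inferInstanceAs (CommRing (MvPolynomial (Fin 2) F ⧸ Ideal.span {qChartY F p β}))

instance (F : Type*) [Field F] (p : ℕ) (β : F) : Algebra F (ChartY F p β) :=
  inferInstanceAs (Algebra F (MvPolynomial (Fin 2) F ⧸ Ideal.span {qChartY F p β}))

/-- The coordinate ring of `D' ∩ D₊(X)`. -/
def ChartX (F : Type*) [Field F] (p : ℕ) (β : F) : Type _ :=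
  MvPolynomial (Fin 2) F ⧸ Ideal.span {qChartX F p β}

instance (F : Type*) [Field F] (p : ℕ) (β : F) : CommRing (ChartX F p β) :=
  inferInstanceAs (CommRing (MvPolynomial (Fin 2) F ⧸ Ideal.span {qChartX F p β}))

instance (F : Type*) [Field F] (p : ℕ) (β : F) : Algebra F (ChartX F p β) :=
  inferInstanceAs (Algebra F (MvPolynomial (Fin 2) F ⧸ Ideal.span {qChartX F p β}))

/-- The quotient map onto the chart ring `ChartY`. -/
def mkY (F : Type*) [Field F] (p : ℕ) (β : F) :
    MvPolynomial (Fin 2) F →+* ChartY F p β :=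
  Ideal.Quotient.mk (Ideal.span {qChartY F p β})

/-- The quotient map onto the chart ring `ChartX`. -/
def mkX' (F : Type*) [Field F] (p : ℕ) (β : F) :
    MvPolynomial (Fin 2) F →+* ChartX F p β :=
  Ideal.Quotient.mk (Ideal.span {qChartX F p β})

/-- The class of `x` in the chart ring `ChartY`. -/
def xbar (F : Type*) [Field F] (p : ℕ) (β : F) : ChartY F p β := mkY F p β (X 0)

/-- The class of `t` in the chart ring `ChartY`. -/
def tbar (F : Type*) [Field F] (p : ℕ) (β : F) : ChartY F p β := mkY F p β (X 1)

/-- The coordinate ring of the overlap `D' ∩ D₊(X) ∩ D₊(Y)`, obtained from `ChartY` by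
inverting `x`. -/
def Overlap (F : Type*) [Field F] (p : ℕ) (β : F) : Type _ :=
  Localization.Away (xbar F p β)

instance (F : Type*) [Field F] (p : ℕ) (β : F) : CommRing (Overlap F p β) :=
  inferInstanceAs (CommRing (Localization.Away (xbar F p β)))

instance (F : Type*) [Field F] (p : ℕ) (β : F) : Algebra (ChartY F p β) (Overlap F p β) :=
  inferInstanceAs (Algebra (ChartY F p β) (Localization.Away (xbar F p β)))

noncomputable instance (F : Type*) [Field F] (p : ℕ) (β : F) :
    Algebra F (Overlap F p β) :=
  ((algebraMap (ChartY F p β) (Overlap F p β)).comp (algebraMap F (ChartY F p β))).toAlgebra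

/-! ### Auxiliary development -/

namespace Peculiar

section

variable (F : Type*) [Field F] (p : ℕ) [Fact p.Prime] (β : F)

/-- iso sending X 0 ↦ C X, X 1 ↦ X -/
def e0 : MvPolynomial (Fin 2) F ≃ₐ[F] Polynomial (Polynomial F) :=
  (MvPolynomial.renameEquiv F (Equiv.swap 0 1)).trans <|
  (MvPolynomial.finSuccEquiv F 1).trans <|
  Polynomial.mapAlgEquiv <|
  (MvPolynomial.finSuccEquiv F 0).trans (Polynomial.mapAlgEquiv (MvPolynomial.isEmptyAlgEquiv F (Fin 0)))

lemma e0_X1 : e0 F (X 1) = Polynomial.X := by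
  have h1 : (Equiv.swap (0:Fin 2) 1) 1 = 0 := Equiv.swap_apply_right 0 1
  rw [e0]
  simp only [AlgEquiv.trans_apply, MvPolynomial.renameEquiv_apply, MvPolynomial.rename_X, h1,
    MvPolynomial.finSuccEquiv_X_zero, Polynomial.coe_mapAlgEquiv, Polynomial.map_X]

lemma e0_X0 : e0 F (X 0) = Polynomial.C Polynomial.X := by
  have h1 : (Equiv.swap (0:Fin 2) 1) 0 = (0 : Fin 1).succ := Equiv.swap_apply_left 0 1
  rw [e0]
  simp only [AlgEquiv.trans_apply, MvPolynomial.renameEquiv_apply, MvPolynomial.rename_X, h1,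
    MvPolynomial.finSuccEquiv_X_succ, Polynomial.coe_mapAlgEquiv, Polynomial.map_C,
    AlgEquiv.trans_apply, MvPolynomial.finSuccEquiv_X_zero, Polynomial.map_X]
  congr 1
  simp [MvPolynomial.finSuccEquiv_X_zero]

lemma e0_C (c : F) : e0 F (MvPolynomial.C c) = Polynomial.C (Polynomial.C c) := by
  have : MvPolynomial.C (σ := Fin 2) c = algebraMap F _ c := rfl
  rw [this, AlgEquiv.commutes]
  rfl

def aY : Polynomial F := Polynomial.C β * (Polynomial.X ^ p - Polynomial.C β) ^ p
def fY : Polynomial (Polynomial F) := Polynomial.X ^ p - Polynomial.C (aY F p β)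
def aX : Polynomial F := Polynomial.C β * (1 - Polynomial.C β * Polynomial.X ^ p) ^ p
def fX : Polynomial (Polynomial F) := Polynomial.X ^ p - Polynomial.C (aX F p β)
def aB : LaurentPolynomial F := Polynomial.toLaurent (aY F p β)
def gB : Polynomial (LaurentPolynomial F) := Polynomial.X ^ p - Polynomial.C (aB F p β)

lemma e0_qChartY : e0 F (qChartY F p β) = fY F p β := by
  rw [qChartY, fY, aY]
  simp only [map_sub, map_pow, map_mul, map_one, e0_X1, e0_X0, e0_C]

lemma e0_qChartX : e0 F (qChartX F p β) = fX F p β := by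
  rw [qChartX, fX, aX]
  simp only [map_sub, map_pow, map_mul, map_one, e0_X1, e0_X0, e0_C]

lemma pne : p ≠ 0 := (Fact.out : p.Prime).ne_zero

lemma fY_monic : (fY F p β).Monic := Polynomial.monic_X_pow_sub_C _ (pne p)
lemma fX_monic : (fX F p β).Monic := Polynomial.monic_X_pow_sub_C _ (pne p)
lemma gB_monic : (gB F p β).Monic := Polynomial.monic_X_pow_sub_C _ (pne p)

/-! ### Irreducibility -/

lemma no_pth_root (hβ : ∀ γ : F, γ ^ p ≠ β) (c : RatFunc F) :
    c ^ p ≠ algebraMap F (RatFunc F) β := by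
  intro h
  have hd : (c.denom : Polynomial F) ≠ 0 := c.denom_ne_zero
  have hd' : algebraMap (Polynomial F) (RatFunc F) c.denom ≠ 0 := by
    simpa using hd
  have hnum : algebraMap (Polynomial F) (RatFunc F) c.num = c * algebraMap _ _ c.denom := by
    rw [eq_comm, ← eq_div_iff hd', RatFunc.num_div_denom]
  have key : algebraMap (Polynomial F) (RatFunc F) (c.num ^ p) =
      algebraMap (Polynomial F) (RatFunc F) (Polynomial.C β * c.denom ^ p) := by
    rw [map_pow, hnum, mul_pow, h, map_mul, map_pow]
    rw [show algebraMap (Polynomial F) (RatFunc F) (Polynomial.C β)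
        = algebraMap F (RatFunc F) β from rfl]
  have key2 : c.num ^ p = Polynomial.C β * c.denom ^ p :=
    IsFractionRing.injective (Polynomial F) (RatFunc F) key
  have hlc := congrArg Polynomial.leadingCoeff key2
  rw [Polynomial.leadingCoeff_pow, Polynomial.leadingCoeff_mul, Polynomial.leadingCoeff_pow,
    Polynomial.leadingCoeff_C, (RatFunc.monic_denom c).leadingCoeff, one_pow, mul_one] at hlc
  exact hβ _ hlc

lemma fY_irred (hβ : ∀ γ : F, γ ^ p ≠ β) : Irreducible (fY F p β) := by
  have hp : p.Prime := Fact.out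
  have hm : (fY F p β).Monic := fY_monic F p β
  rw [hm.irreducible_iff_irreducible_map_fraction_map (K := RatFunc F)]
  rw [fY]
  simp only [Polynomial.map_sub, Polynomial.map_pow, Polynomial.map_X, Polynomial.map_C]
  apply X_pow_sub_C_irreducible_of_prime hp
  intro b hb
  have hne : ((Polynomial.X : Polynomial F) ^ p - Polynomial.C β) ≠ 0 := by
    intro h0
    have := congrArg Polynomial.natDegree h0
    rw [Polynomial.natDegree_X_pow_sub_C] at this
    simp at this
    exact hp.ne_zero this
  have hXp : algebraMap (Polynomial F) (RatFunc F)
      ((Polynomial.X : Polynomial F) ^ p - Polynomial.C β) ≠ 0 := by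
    intro h0
    exact hne (IsFractionRing.injective (Polynomial F) (RatFunc F) (by rw [h0, map_zero]))
  set d := algebraMap (Polynomial F) (RatFunc F)
    ((Polynomial.X : Polynomial F) ^ p - Polynomial.C β) with hdd
  apply no_pth_root F p β hβ (b / d)
  rw [div_pow]
  rw [hb, aY, map_mul, map_pow]
  rw [show algebraMap (Polynomial F) (RatFunc F) (Polynomial.C β)
      = algebraMap F (RatFunc F) β from rfl]
  rw [← hdd]
  field_simp

lemma qChartY_irred (hβ : ∀ γ : F, γ ^ p ≠ β) : Irreducible (qChartY F p β) := by
  have := fY_irred F p β hβ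
  rw [← e0_qChartY F p β] at this
  exact (MulEquiv.irreducible_iff (e0 F)).mp this

/-! ### AdjoinRoot models -/

abbrev AY := AdjoinRoot (fY F p β)
abbrev AX := AdjoinRoot (fX F p β)
abbrev BB := AdjoinRoot (gB F p β)

open LaurentPolynomial Polynomial AdjoinRoot

lemma fY_natDegree : (fY F p β).natDegree = p := by
  rw [fY]; exact Polynomial.natDegree_X_pow_sub_C

lemma fX_natDegree : (fX F p β).natDegree = p := by
  rw [fX]; exact Polynomial.natDegree_X_pow_sub_C

lemma gB_natDegree : (gB F p β).natDegree = p := by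
  rw [gB]; exact Polynomial.natDegree_X_pow_sub_C

def bLaurent : Module.Basis ℤ F (LaurentPolynomial F) := AddMonoidAlgebra.basis ℤ F

lemma bLaurent_apply (i : ℤ) : bLaurent F i = T i := rfl

def bY : Module.Basis (ℕ × Fin p) F (AY F p β) :=
  (Polynomial.basisMonomials F).smulTower
    (((AdjoinRoot.powerBasis' (fY_monic F p β)).basis).reindex
      (finCongr (by rw [AdjoinRoot.powerBasis'_dim, fY_natDegree])))

def bX : Module.Basis (ℕ × Fin p) F (AX F p β) :=
  (Polynomial.basisMonomials F).smulTower
    (((AdjoinRoot.powerBasis' (fX_monic F p β)).basis).reindex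
      (finCongr (by rw [AdjoinRoot.powerBasis'_dim, fX_natDegree])))

def bB : Module.Basis (ℤ × Fin p) F (BB F p β) :=
  (bLaurent F).smulTower
    (((AdjoinRoot.powerBasis' (gB_monic F p β)).basis).reindex
      (finCongr (by rw [AdjoinRoot.powerBasis'_dim, gB_natDegree])))

lemma bY_apply (i : ℕ) (j : Fin p) :
    bY F p β (i, j) = AdjoinRoot.of (fY F p β) (Polynomial.X ^ i) * AdjoinRoot.root (fY F p β) ^ (j : ℕ) := by
  rw [bY, Module.Basis.smulTower_apply, Module.Basis.reindex_apply, PowerBasis.basis_eq_pow,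
    AdjoinRoot.powerBasis'_gen, Algebra.smul_def, AdjoinRoot.algebraMap_eq,
    Polynomial.coe_basisMonomials]
  simp [← Polynomial.X_pow_eq_monomial]

lemma bX_apply (i : ℕ) (j : Fin p) :
    bX F p β (i, j) = AdjoinRoot.of (fX F p β) (Polynomial.X ^ i) * AdjoinRoot.root (fX F p β) ^ (j : ℕ) := by
  rw [bX, Module.Basis.smulTower_apply, Module.Basis.reindex_apply, PowerBasis.basis_eq_pow,
    AdjoinRoot.powerBasis'_gen, Algebra.smul_def, AdjoinRoot.algebraMap_eq,
    Polynomial.coe_basisMonomials]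
  simp [← Polynomial.X_pow_eq_monomial]

lemma bB_apply (m : ℤ) (j : Fin p) :
    bB F p β (m, j) = AdjoinRoot.of (gB F p β) (T m) * AdjoinRoot.root (gB F p β) ^ (j : ℕ) := by
  rw [bB, Module.Basis.smulTower_apply, Module.Basis.reindex_apply, PowerBasis.basis_eq_pow,
    AdjoinRoot.powerBasis'_gen, Algebra.smul_def, AdjoinRoot.algebraMap_eq]
  simp [bLaurent_apply]

lemma bB_zero : bB F p β (0, 0) = 1 := by
  rw [bB_apply]
  simp [LaurentPolynomial.T_zero]

/-! ### The map `L : AY → BB` -/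

lemma evalLB : Polynomial.eval₂ ((AdjoinRoot.of (gB F p β)).comp Polynomial.toLaurent)
    (AdjoinRoot.root (gB F p β)) (fY F p β) = 0 := by
  have h := AdjoinRoot.eval₂_root (gB F p β)
  rw [fY]
  simp only [Polynomial.eval₂_sub, Polynomial.eval₂_X_pow, Polynomial.eval₂_C,
    RingHom.comp_apply]
  rw [show Polynomial.toLaurent (aY F p β) = aB F p β from rfl]
  rw [show (gB F p β) = Polynomial.X ^ p - Polynomial.C (aB F p β) from rfl] at h
  simp only [Polynomial.eval₂_sub, Polynomial.eval₂_X_pow, Polynomial.eval₂_C] at h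
  exact h

def LB : AY F p β →+* BB F p β :=
  AdjoinRoot.lift ((AdjoinRoot.of (gB F p β)).comp Polynomial.toLaurent)
    (AdjoinRoot.root (gB F p β)) (evalLB F p β)

lemma LB_of (q : Polynomial F) :
    LB F p β (AdjoinRoot.of _ q) = AdjoinRoot.of _ (Polynomial.toLaurent q) :=
  AdjoinRoot.lift_of _

lemma LB_root : LB F p β (AdjoinRoot.root _) = AdjoinRoot.root _ :=
  AdjoinRoot.lift_root _

lemma LB_algebraMap (c : F) :
    LB F p β (algebraMap F (AY F p β) c) = algebraMap F (BB F p β) c := by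
  rw [IsScalarTower.algebraMap_apply F (Polynomial F) (AY F p β), AdjoinRoot.algebraMap_eq,
    LB_of, IsScalarTower.algebraMap_apply F (LaurentPolynomial F) (BB F p β),
    AdjoinRoot.algebraMap_eq]
  congr 1
  rw [Polynomial.algebraMap_eq, Polynomial.toLaurent_C]
  rfl

lemma LB_basis (i : ℕ) (j : Fin p) :
    LB F p β (bY F p β (i, j)) = bB F p β ((i : ℤ), j) := by
  simp only [bY_apply, bB_apply, map_mul, map_pow, LB_of, LB_root, Polynomial.toLaurent_X]
  rw [← map_pow, LaurentPolynomial.T_pow, mul_one]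

end

/-! ### linear algebra helpers -/

section Helpers

variable {F : Type*} [Field F] {M N : Type*} [AddCommGroup M] [AddCommGroup N]
  [Module F M] [Module F N]

lemma repr_comp_eq {ι κ : Type*} (b : Module.Basis ι F M) (b' : Module.Basis κ F N) (L : M →ₗ[F] N)
    (σ : ι → κ) (h : ∀ i, L (b i) = b' (σ i)) (v : M) :
    b'.repr (L v) = Finsupp.mapDomain σ (b.repr v) := by
  have key : (b'.repr.toLinearMap.comp L) =
      (Finsupp.lmapDomain F F σ).comp (b.repr.toLinearMap) := by
    apply b.ext
    intro i
    simp only [LinearMap.comp_apply, LinearEquiv.coe_toLinearMap, h i, Module.Basis.repr_self,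
      Finsupp.lmapDomain_apply, Finsupp.mapDomain_single]
  exact congrFun (congrArg (fun f => f.toFun) key) v

lemma inj_of_basis {ι κ : Type*} (b : Module.Basis ι F M) (b' : Module.Basis κ F N) (L : M →ₗ[F] N)
    (σ : ι → κ) (hσ : Function.Injective σ) (h : ∀ i, L (b i) = b' (σ i)) :
    Function.Injective L := by
  intro v w hvw
  have h2 := congrArg b'.repr hvw
  rw [repr_comp_eq b b' L σ h v, repr_comp_eq b b' L σ h w] at h2
  exact b.repr.injective (Finsupp.mapDomain_injective hσ h2)

lemma range_of_basis {ι : Type*} (b : Module.Basis ι F M) (L : M →ₗ[F] N) :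
    LinearMap.range L = Submodule.span F (Set.range (L ∘ b)) := by
  conv_lhs => rw [LinearMap.range_eq_map, ← b.span_eq, Submodule.map_span]
  rw [Set.range_comp]

end Helpers

section

variable (F : Type*) [Field F] (p : ℕ) [Fact p.Prime] (β : F)

open LaurentPolynomial Polynomial AdjoinRoot

/-- linear version of `LB` -/
def LBl : AY F p β →ₗ[F] BB F p β where
  toFun := LB F p β
  map_add' := map_add _
  map_smul' := by
    intro c x
    simp only [RingHom.id_apply]
    rw [Algebra.smul_def, Algebra.smul_def, map_mul, LB_algebraMap]

lemma LB_injective : Function.Injective (LB F p β) :=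
  inj_of_basis (bY F p β) (bB F p β) (LBl F p β) (fun y => ((y.1 : ℤ), y.2))
    (fun y z hyz => by
      obtain ⟨hy1, hy2⟩ := Prod.mk.injEq .. ▸ hyz
      exact Prod.ext (by exact_mod_cast hy1) hy2)
    (fun y => LB_basis F p β y.1 y.2)

/-- the distinguished element `x` in `AY` -/
def xA : AY F p β := AdjoinRoot.of _ Polynomial.X

instance : Algebra (AY F p β) (BB F p β) := (LB F p β).toAlgebra

lemma algebraMap_AB : algebraMap (AY F p β) (BB F p β) = LB F p β := rfl

lemma LB_xA : LB F p β (xA F p β) = AdjoinRoot.of _ (T 1) := by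
  rw [xA, LB_of, Polynomial.toLaurent_X]

lemma isUnit_Tone : IsUnit (AdjoinRoot.of (gB F p β) (T 1)) :=
  IsUnit.of_mul_eq_one (AdjoinRoot.of _ (T (-1)))
    (by rw [← map_mul, ← LaurentPolynomial.T_add, add_neg_cancel, LaurentPolynomial.T_zero, map_one])

instance isLocBB : IsLocalization (Submonoid.powers (xA F p β)) (BB F p β) where
  map_units := by
    rintro ⟨y, n, rfl⟩
    rw [algebraMap_AB, map_pow, LB_xA]
    exact (isUnit_Tone F p β).pow n
  surj := by
    intro z
    suffices h : ∃ (n : ℕ) (a : AY F p β), z * (AdjoinRoot.of (gB F p β) (T 1)) ^ n = LB F p β a by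
      obtain ⟨n, a, ha⟩ := h
      refine ⟨(a, ⟨xA F p β ^ n, n, rfl⟩), ?_⟩
      rw [algebraMap_AB, map_pow, LB_xA]
      exact ha
    have hz : z ∈ Submodule.span F (Set.range (bB F p β)) := by
      rw [(bB F p β).span_eq]; trivial
    induction hz using Submodule.span_induction with
    | mem x hx =>
      obtain ⟨⟨m, j⟩, rfl⟩ := hx
      refine ⟨m.natAbs, bY F p β ((m + m.natAbs).toNat, j), ?_⟩
      rw [LB_basis, bB_apply, bB_apply, ← map_pow, LaurentPolynomial.T_pow, mul_one,
        mul_right_comm, ← map_mul, ← LaurentPolynomial.T_add]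
      have : (T (m + (m.natAbs : ℤ)) : LaurentPolynomial F) = T (((m + m.natAbs).toNat : ℤ)) := by
        congr 1; omega
      rw [this]
    | zero => exact ⟨0, 0, by simp⟩
    | add x y hx hy ihx ihy =>
      obtain ⟨n1, a1, h1⟩ := ihx
      obtain ⟨n2, a2, h2⟩ := ihy
      refine ⟨n1 + n2, a1 * xA F p β ^ n2 + a2 * xA F p β ^ n1, ?_⟩
      rw [map_add, map_mul, map_mul, map_pow, map_pow, LB_xA, ← h1, ← h2]
      ring
    | smul c x hx ihx =>
      obtain ⟨n, a, hn⟩ := ihx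
      refine ⟨n, c • a, ?_⟩
      rw [smul_mul_assoc, hn]
      exact ((LBl F p β).map_smul c a).symm
  exists_of_eq := by
    intro a b h
    exact ⟨1, by rw [LB_injective F p β h]⟩

/-- ring equivalence `ChartY ≃ AY` -/
def eY : ChartY F p β ≃+* AY F p β :=
  Ideal.quotientEquiv _ _ (e0 F).toRingEquiv
    (by rw [Ideal.map_span, Set.image_singleton]
        congr 1
        exact congrArg _ (e0_qChartY F p β).symm)

/-- ring equivalence `ChartX ≃ AX` -/
def eX : ChartX F p β ≃+* AX F p β :=
  Ideal.quotientEquiv _ _ (e0 F).toRingEquiv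
    (by rw [Ideal.map_span, Set.image_singleton]
        congr 1
        exact congrArg _ (e0_qChartX F p β).symm)

lemma eY_mk (q : MvPolynomial (Fin 2) F) :
    eY F p β (mkY F p β q) = AdjoinRoot.mk (fY F p β) (e0 F q) :=
  Ideal.quotientEquiv_mk _ _ _ _ q

lemma eX_mk (q : MvPolynomial (Fin 2) F) :
    eX F p β (mkX' F p β q) = AdjoinRoot.mk (fX F p β) (e0 F q) :=
  Ideal.quotientEquiv_mk _ _ _ _ q

lemma eY_xbar : eY F p β (xbar F p β) = xA F p β := by
  rw [xbar, eY_mk, e0_X0]; rfl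

lemma eY_tbar : eY F p β (tbar F p β) = AdjoinRoot.root (fY F p β) := by
  rw [tbar, eY_mk, e0_X1]; rfl

lemma eY_algebraMap (c : F) :
    eY F p β (algebraMap F (ChartY F p β) c) = algebraMap F (AY F p β) c := by
  rw [show algebraMap F (ChartY F p β) c = mkY F p β (MvPolynomial.C c) from rfl, eY_mk, e0_C]
  rfl

lemma eX_algebraMap (c : F) :
    eX F p β (algebraMap F (ChartX F p β) c) = algebraMap F (AX F p β) c := by
  rw [show algebraMap F (ChartX F p β) c = mkX' F p β (MvPolynomial.C c) from rfl, eX_mk, e0_C]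
  rfl

/-! ### index sets and spans -/

def Tset : Set (ℤ × Fin p) := {z | 0 ≤ z.1}
def Sset : Set (ℤ × Fin p) := {z | z.1 + ((p * (z.2 : ℕ) : ℕ) : ℤ) ≤ 0}
def Uset : Set (ℤ × Fin p) := Tset p ∪ Sset p

lemma TS_inter : Tset p ∩ Sset p = {((0:ℤ), (0 : Fin p))} := by
  have hp : 0 < p := (Fact.out : p.Prime).pos
  ext ⟨m, j⟩
  simp only [Set.mem_inter_iff, Tset, Sset, Set.mem_setOf_eq, Set.mem_singleton_iff,
    Prod.mk.injEq]
  constructor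
  · rintro ⟨h1, h2⟩
    have hpj : (0 : ℤ) ≤ ((p * (j : ℕ) : ℕ) : ℤ) := Int.natCast_nonneg _
    have hm : m = 0 := le_antisymm (by linarith) h1
    have hj0 : (p * (j : ℕ) : ℕ) = 0 := by
      have : ((p * (j : ℕ) : ℕ) : ℤ) = 0 := le_antisymm (by linarith) hpj
      exact_mod_cast this
    have : (j : ℕ) = 0 := by
      rcases Nat.mul_eq_zero.mp hj0 with h | h
      · exact absurd h hp.ne'
      · exact h
    exact ⟨hm, Fin.ext (by simpa using this)⟩
  · rintro ⟨rfl, rfl⟩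
    simp

lemma range_LBl :
    LinearMap.range (LBl F p β) = Submodule.span F (bB F p β '' Tset p) := by
  rw [range_of_basis (bY F p β)]
  congr 1
  ext w
  constructor
  · rintro ⟨⟨i, j⟩, rfl⟩
    exact ⟨((i : ℤ), j), by simp [Tset], (LB_basis F p β i j).symm⟩
  · rintro ⟨⟨m, j⟩, hm, rfl⟩
    have hm' : (0 : ℤ) ≤ m := hm
    refine ⟨(m.toNat, j), ?_⟩
    show LB F p β (bY F p β (m.toNat, j)) = _
    rw [LB_basis]
    congr 2
    omega

lemma inf_span :
    Submodule.span F (bB F p β '' Tset p) ⊓ Submodule.span F (bB F p β '' Sset p)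
      = Submodule.span F {(1 : BB F p β)} := by
  have h1 : ({(1 : BB F p β)} : Set _) = bB F p β '' (Tset p ∩ Sset p) := by
    rw [TS_inter, Set.image_singleton, bB_zero]
  rw [h1]
  ext w
  simp only [Submodule.mem_inf, Module.Basis.mem_span_image, Set.subset_inter_iff]

open LaurentPolynomial Polynomial AdjoinRoot

lemma of_T_pow (a : ℤ) (n : ℕ) :
    (AdjoinRoot.of (gB F p β) (T a)) ^ n = AdjoinRoot.of (gB F p β) (T (n * a)) := by
  rw [← map_pow, LaurentPolynomial.T_pow]

lemma Psi_basis (Ψ : AX F p β →+* BB F p β)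
    (hx : Ψ (AdjoinRoot.of _ Polynomial.X) = AdjoinRoot.of _ (T (-1)))
    (ht : Ψ (AdjoinRoot.root _) = AdjoinRoot.root _ * AdjoinRoot.of _ (T (-(p:ℤ))))
    (i : ℕ) (j : Fin p) :
    Ψ (bX F p β (i, j)) = bB F p β (-(i:ℤ) - ((p * (j : ℕ) : ℕ) : ℤ), j) := by
  rw [bX_apply, bB_apply, map_mul]
  simp only [map_pow]
  rw [hx, ht, mul_pow, of_T_pow, of_T_pow, mul_comm (AdjoinRoot.root (gB F p β) ^ (j:ℕ)) _,
    ← mul_assoc, ← map_mul, ← LaurentPolynomial.T_add]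
  have : (i:ℤ) * -1 + (j:ℕ) * -(p:ℤ) = -(i:ℤ) - ((p * (j : ℕ) : ℕ) : ℤ) := by
    push_cast; ring
  rw [this]

lemma range_Psi (Ψa : AX F p β →ₐ[F] BB F p β)
    (hbasis : ∀ i j, Ψa (bX F p β (i,j)) = bB F p β (-(i:ℤ) - ((p * (j : ℕ) : ℕ) : ℤ), j)) :
    LinearMap.range Ψa.toLinearMap = Submodule.span F (bB F p β '' Sset p) := by
  rw [range_of_basis (bX F p β)]
  congr 1
  ext w
  constructor
  · rintro ⟨⟨i, j⟩, rfl⟩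
    refine ⟨(-(i:ℤ) - ((p * (j : ℕ) : ℕ) : ℤ), j), ?_, (hbasis i j).symm⟩
    simp only [Sset, Set.mem_setOf_eq]
    have : (0:ℤ) ≤ (i:ℤ) := Int.natCast_nonneg _
    linarith
  · rintro ⟨⟨m, j⟩, hm, rfl⟩
    have hm' : m + ((p * (j : ℕ) : ℕ) : ℤ) ≤ 0 := hm
    refine ⟨((-m - ((p * (j : ℕ) : ℕ) : ℤ)).toNat, j), ?_⟩
    show Ψa (bX F p β _) = _
    rw [hbasis]
    have h : -(((-m - ((p * (j : ℕ) : ℕ) : ℤ)).toNat : ℤ)) - ((p * (j : ℕ) : ℕ) : ℤ) = m := by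
      rw [Int.toNat_of_nonneg (by linarith)]; ring
    rw [h]

/-! ### counting the complement -/

def eC : ((Uset p)ᶜ : Set (ℤ × Fin p)) ≃ (Σ j : Fin p, Fin (p * (j : ℕ) - 1)) where
  toFun z := ⟨z.val.2, ⟨(-z.val.1).toNat - 1, by
    have hz := z.prop
    simp only [Uset, Tset, Sset, Set.mem_compl_iff, Set.mem_union, Set.mem_setOf_eq,
      not_or, not_le] at hz
    obtain ⟨h1, h2⟩ := hz
    omega⟩⟩
  invFun y := ⟨(-(y.2 : ℤ) - 1, y.1), by
    have hy : (y.2 : ℕ) < p * (y.1 : ℕ) - 1 := y.2.isLt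
    simp only [Uset, Tset, Sset, Set.mem_compl_iff, Set.mem_union, Set.mem_setOf_eq,
      not_or, not_le]
    omega⟩
  left_inv z := by
    have hz := z.prop
    simp only [Uset, Tset, Sset, Set.mem_compl_iff, Set.mem_union, Set.mem_setOf_eq,
      not_or, not_le] at hz
    obtain ⟨h1, h2⟩ := hz
    apply Subtype.ext
    apply Prod.ext
    · show -(((-z.val.1).toNat - 1 : ℕ) : ℤ) - 1 = z.val.1
      omega
    · rfl
  right_inv y := by
    rcases y with ⟨j, k⟩
    have hy : (k : ℕ) < p * (j : ℕ) - 1 := k.isLt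
    refine congrArg (Sigma.mk j) (Fin.ext ?_)
    show (-(-(k : ℤ) - 1)).toNat - 1 = (k : ℕ)
    omega

instance fintypeUc : Fintype ((Uset p)ᶜ : Set (ℤ × Fin p)) :=
  Fintype.ofEquiv _ (eC p).symm

lemma card_Uc : Fintype.card ((Uset p)ᶜ : Set (ℤ × Fin p))
    = ∑ j : Fin p, (p * (j : ℕ) - 1) := by
  rw [Fintype.card_congr (eC p), Fintype.card_sigma]
  simp

lemma sum_aux : ∀ n : ℕ, 1 ≤ n →
    (2 * ((∑ j ∈ Finset.range n, (p * j - 1) : ℕ) : ℤ))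
      = p * n * (n - 1) - 2 * (n - 1) := by
  have hp2 : 2 ≤ p := (Fact.out : p.Prime).two_le
  intro n hn
  induction n, hn using Nat.le_induction with
  | base => simp
  | succ n hn ih =>
    rw [Finset.sum_range_succ]
    have h1 : 1 ≤ p * n := Nat.one_le_iff_ne_zero.mpr (by positivity)
    push_cast [Nat.cast_sub h1]
    push_cast at ih
    linear_combination ih

lemma two_mul_card :
    (2 * (Fintype.card ((Uset p)ᶜ : Set (ℤ × Fin p))) : ℤ)
      = (p : ℤ) ^ 3 - (p : ℤ) ^ 2 - 2 * p + 2 := by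
  have hp : 1 ≤ p := (Fact.out : p.Prime).pos
  rw [card_Uc]
  rw [Fin.sum_univ_eq_sum_range (fun j => p * j - 1) p]
  rw [sum_aux p p hp]
  push_cast
  ring

/-! ### the localization equivalence -/

instance isLocOverlap : IsLocalization (Submonoid.powers (xbar F p β)) (Overlap F p β) :=
  inferInstanceAs
    (IsLocalization (Submonoid.powers (xbar F p β)) (Localization (Submonoid.powers (xbar F p β))))

lemma hpow : Submonoid.map (eY F p β).toMonoidHom (Submonoid.powers (xbar F p β))
    = Submonoid.powers (xA F p β) := by
  rw [Submonoid.map_powers]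
  congr 1
  exact eY_xbar F p β

def E : Overlap F p β ≃+* BB F p β :=
  IsLocalization.ringEquivOfRingEquiv (Overlap F p β) (BB F p β) (eY F p β) (hpow F p β)

lemma E_algebraMap (a : ChartY F p β) :
    E F p β (algebraMap (ChartY F p β) (Overlap F p β) a) = LB F p β (eY F p β a) := by
  rw [E]
  exact IsLocalization.ringEquivOfRingEquiv_eq (hpow F p β) a

lemma algebraMap_F_Overlap (c : F) :
    algebraMap F (Overlap F p β) c
      = algebraMap (ChartY F p β) (Overlap F p β) (algebraMap F (ChartY F p β) c) := rfl

lemma E_algebraMap_F (c : F) :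
    E F p β (algebraMap F (Overlap F p β) c) = algebraMap F (BB F p β) c := by
  rw [algebraMap_F_Overlap, E_algebraMap, eY_algebraMap, LB_algebraMap]

def Ea : Overlap F p β ≃ₐ[F] BB F p β :=
  AlgEquiv.ofRingEquiv (f := E F p β) (E_algebraMap_F F p β)

def eYa : ChartY F p β ≃ₐ[F] AY F p β :=
  AlgEquiv.ofRingEquiv (f := eY F p β) (eY_algebraMap F p β)

def eXa : ChartX F p β ≃ₐ[F] AX F p β :=
  AlgEquiv.ofRingEquiv (f := eX F p β) (eX_algebraMap F p β)

/-! ### the quotient dimension -/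

lemma finrank_quotient_U :
    Module.finrank F (BB F p β ⧸ Submodule.span F (bB F p β '' Uset p))
      = Fintype.card ((Uset p)ᶜ : Set (ℤ × Fin p)) := by
  have hmap : Submodule.map (((bB F p β).repr : BB F p β ≃ₗ[F] ((ℤ × Fin p) →₀ F)) : BB F p β →ₗ[F] ((ℤ × Fin p) →₀ F))
        (Submodule.span F (bB F p β '' Uset p))
      = Finsupp.supported F F (Uset p) := by
    rw [Submodule.map_span, Finsupp.supported_eq_span_single, Set.image_image]
    congr 1
    exact Set.image_congr (fun u _ => (bB F p β).repr_self u)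
  have hcompl : IsCompl (Finsupp.supported F F (Uset p))
      (Finsupp.supported F F ((Uset p)ᶜ)) := by
    constructor
    · exact Finsupp.disjoint_supported_supported disjoint_compl_right
    · rw [codisjoint_iff, ← Finsupp.supported_union, Set.union_compl_self,
        Finsupp.supported_univ]
  let q1 := Submodule.Quotient.equiv (Submodule.span F (bB F p β '' Uset p))
    (Finsupp.supported F F (Uset p)) ((bB F p β).repr) hmap
  let q2 := Submodule.quotientEquivOfIsCompl _ _ hcompl
  let q3 := Finsupp.supportedEquivFinsupp (M := F) (R := F) ((Uset p)ᶜ)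
  let q4 := Finsupp.linearEquivFunOnFinite F F (((Uset p)ᶜ : Set (ℤ × Fin p)))
  rw [(q1.trans (q2.trans (q3.trans q4))).finrank_eq]
  exact Module.finrank_fintype_fun_eq_card F

end

end Peculiar

open Peculiar LaurentPolynomial in
/-- Let `F` be a field of characteristic `p > 0` and `β ∈ F^×` not a `p`-th
power.  Let `D' ⊆ P(1,1,p) = Proj F[X,Y,T]` (`deg X = deg Y = 1`, `deg T = p`) be the curve
defined by the irreducible homogeneous equation `T^p − β(X^p − βY^p)^p = 0` of degree `p²`.
Then `h⁰(O_{D'}) = 1` and `h¹(O_{D'}) = (p³ − p² − 2p + 2)/2` (so for `p = 2` both equal `1`).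
The cohomology is computed by the Čech complex of the affine cover `D₊(X), D₊(Y)`: `H⁰`, the
equalizer of the two restriction maps to the overlap, is exactly the line of constants `F`,
and `H¹`, the cokernel of their difference, has `F`-dimension `(p³ − p² − 2p + 2)/2`.  Here
`ψ` is the map identifying the chart `D₊(X)` inside the overlap, determined by
`x' ↦ x⁻¹` and `t' ↦ t·x⁻ᵖ`. -/
theorem peculiar_curve_cohomology (F : Type*) [Field F] (p : ℕ) [Fact p.Prime] [CharP F p]
    (β : F) (hβ0 : β ≠ 0) (hβ : ∀ γ : F, γ ^ p ≠ β) :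
    Irreducible (qChartY F p β) ∧
    ∀ ψ : ChartX F p β →+* Overlap F p β,
      (∀ c : F, ψ (algebraMap F (ChartX F p β) c) = algebraMap F (Overlap F p β) c) →
      (ψ (mkX' F p β (X 0)) *
        algebraMap (ChartY F p β) (Overlap F p β) (xbar F p β) = 1) →
      (ψ (mkX' F p β (X 1)) *
        algebraMap (ChartY F p β) (Overlap F p β) (xbar F p β) ^ p =
          algebraMap (ChartY F p β) (Overlap F p β) (tbar F p β)) →
      -- h⁰(O_{D'}) = 1 :
      ({z : ChartY F p β × ChartX F p β |
          algebraMap (ChartY F p β) (Overlap F p β) z.1 = ψ z.2} =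
        Set.range (fun c : F =>
          (algebraMap F (ChartY F p β) c, algebraMap F (ChartX F p β) c))) ∧
      -- h¹(O_{D'}) = (p³ − p² − 2p + 2)/2 :
      ∀ (ρL : ChartY F p β →ₗ[F] Overlap F p β) (ψL : ChartX F p β →ₗ[F] Overlap F p β),
        (∀ a, ρL a = algebraMap (ChartY F p β) (Overlap F p β) a) →
        (∀ a, ψL a = ψ a) →
        (2 * (Module.finrank F
          ((Overlap F p β) ⧸
            (LinearMap.range ρL ⊔ LinearMap.range ψL : Submodule F (Overlap F p β)))) : ℤ) =
            (p : ℤ) ^ 3 - (p : ℤ) ^ 2 - 2 * p + 2 := by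

  refine ⟨qChartY_irred F p β hβ, ?_⟩
  intro ψ hψc hψx hψt
  have hTinv : ∀ a : ℤ, (AdjoinRoot.of (gB F p β)) (T a) * (AdjoinRoot.of (gB F p β)) (T (-a)) = 1 := by
    intro a
    rw [← map_mul, ← LaurentPolynomial.T_add, add_neg_cancel, LaurentPolynomial.T_zero, map_one]
  set ψB : ChartX F p β →+* BB F p β := (E F p β).toRingHom.comp ψ with hψBdef
  have hψBapply : ∀ z, ψB z = E F p β (ψ z) := fun z => rfl
  have hEx : E F p β (algebraMap _ (Overlap F p β) (xbar F p β)) = AdjoinRoot.of _ (T 1) := by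
    rw [E_algebraMap, eY_xbar, LB_xA]
  have hEt : E F p β (algebraMap _ (Overlap F p β) (tbar F p β)) = AdjoinRoot.root (gB F p β) := by
    rw [E_algebraMap, eY_tbar, LB_root]
  have h1 : ψB (mkX' F p β (X 0)) * AdjoinRoot.of _ (T 1) = 1 := by
    have h := congrArg (E F p β) hψx
    rw [map_mul, map_one, hEx] at h
    exact h
  have hψBx : ψB (mkX' F p β (X 0)) = AdjoinRoot.of _ (T (-1)) := by
    calc ψB (mkX' F p β (X 0))
        = ψB (mkX' F p β (X 0)) * ((AdjoinRoot.of _ (T 1)) * (AdjoinRoot.of _ (T (-1)))) := by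
          rw [hTinv, mul_one]
      _ = (ψB (mkX' F p β (X 0)) * AdjoinRoot.of _ (T 1)) * AdjoinRoot.of _ (T (-1)) := by
          ring
      _ = AdjoinRoot.of _ (T (-1)) := by rw [h1, one_mul]
  have h2 : ψB (mkX' F p β (X 1)) * AdjoinRoot.of _ (T (p:ℤ)) = AdjoinRoot.root (gB F p β) := by
    have h := congrArg (E F p β) hψt
    rw [map_mul, map_pow, hEx, hEt, of_T_pow] at h
    rw [show ((p:ℕ) * (1:ℤ)) = (p:ℤ) from by ring] at h
    exact h
  have hψBt : ψB (mkX' F p β (X 1))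
      = AdjoinRoot.root (gB F p β) * AdjoinRoot.of _ (T (-(p:ℤ))) := by
    calc ψB (mkX' F p β (X 1))
        = ψB (mkX' F p β (X 1)) * ((AdjoinRoot.of _ (T (p:ℤ))) * (AdjoinRoot.of _ (T (-(p:ℤ))))) := by
          rw [hTinv, mul_one]
      _ = (ψB (mkX' F p β (X 1)) * AdjoinRoot.of _ (T (p:ℤ))) * AdjoinRoot.of _ (T (-(p:ℤ))) := by
          ring
      _ = _ := by rw [h2]
  have heXx : eX F p β (mkX' F p β (X 0)) = AdjoinRoot.of (fX F p β) Polynomial.X := by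
    rw [eX_mk, e0_X0]; rfl
  have heXt : eX F p β (mkX' F p β (X 1)) = AdjoinRoot.root (fX F p β) := by
    rw [eX_mk, e0_X1]; rfl
  set Ψ : AX F p β →+* BB F p β := ψB.comp (eX F p β).symm.toRingHom with hΨdef
  have hΨapply : ∀ z, Ψ ((eX F p β) z) = ψB z := by
    intro z
    show ψB ((eX F p β).symm ((eX F p β) z)) = ψB z
    rw [RingEquiv.symm_apply_apply]
  have hΨx : Ψ (AdjoinRoot.of (fX F p β) Polynomial.X) = AdjoinRoot.of _ (T (-1)) := by
    rw [← heXx, hΨapply, hψBx]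
  have hΨt : Ψ (AdjoinRoot.root (fX F p β))
      = AdjoinRoot.root (gB F p β) * AdjoinRoot.of _ (T (-(p:ℤ))) := by
    rw [← heXt, hΨapply, hψBt]
  have hΨc : ∀ c : F, Ψ (algebraMap F (AX F p β) c) = algebraMap F (BB F p β) c := by
    intro c
    rw [← eX_algebraMap, hΨapply, hψBapply, hψc, E_algebraMap_F]
  set Ψa : AX F p β →ₐ[F] BB F p β := { Ψ with commutes' := hΨc } with hΨadef
  have hΨa_apply : ∀ z, Ψa z = Ψ z := fun z => rfl
  have hbasis : ∀ (i : ℕ) (j : Fin p), Ψa (bX F p β (i, j))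
      = bB F p β (-(i:ℤ) - ((p * (j : ℕ) : ℕ) : ℤ), j) := by
    intro i j
    rw [hΨa_apply]
    exact Psi_basis F p β Ψ hΨx hΨt i j
  have hinjΨ : Function.Injective Ψa := by
    apply inj_of_basis (bX F p β) (bB F p β) Ψa.toLinearMap
      (fun y => (-(y.1:ℤ) - ((p * (y.2 : ℕ) : ℕ) : ℤ), y.2))
      ?_ (fun y => hbasis y.1 y.2)
    rintro ⟨i, j⟩ ⟨i', j'⟩ hy
    have hy2 : j = j' := congrArg Prod.snd hy
    subst hy2
    have hy1 : -(i:ℤ) - ((p * (j : ℕ) : ℕ) : ℤ) = -(i':ℤ) - ((p * (j : ℕ) : ℕ) : ℤ) :=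
      congrArg Prod.fst hy
    have : (i:ℤ) = (i':ℤ) := by linarith
    exact Prod.ext (by exact_mod_cast this) rfl
  constructor
  · -- H⁰
    ext z
    simp only [Set.mem_setOf_eq, Set.mem_range]
    constructor
    · intro h
      have hw : LB F p β (eY F p β z.1) = Ψa (eX F p β z.2) := by
        rw [hΨa_apply, hΨapply, hψBapply, ← h, E_algebraMap]
      have hw1 : LB F p β (eY F p β z.1) ∈ Submodule.span F (bB F p β '' Tset p) := by
        rw [← range_LBl]
        exact ⟨eY F p β z.1, rfl⟩
      have hw2 : LB F p β (eY F p β z.1) ∈ Submodule.span F (bB F p β '' Sset p) := by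
        rw [← range_Psi F p β Ψa hbasis, hw]
        exact ⟨eX F p β z.2, rfl⟩
      have hmem : LB F p β (eY F p β z.1) ∈ Submodule.span F {(1 : BB F p β)} := by
        rw [← inf_span]
        exact ⟨hw1, hw2⟩
      obtain ⟨c, hc⟩ := Submodule.mem_span_singleton.mp hmem
      rw [Algebra.smul_def, mul_one] at hc
      refine ⟨c, ?_⟩
      have hz1 : algebraMap F (ChartY F p β) c = z.1 := by
        apply (eY F p β).injective
        apply LB_injective F p β
        rw [eY_algebraMap, LB_algebraMap, hc]
      have hz2 : algebraMap F (ChartX F p β) c = z.2 := by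
        apply (eX F p β).injective
        apply hinjΨ
        rw [hΨa_apply, hΨapply, hψBapply, hψc, E_algebraMap_F, hc, ← hw]
      exact Prod.ext hz1 hz2
    · rintro ⟨c, rfl⟩
      show algebraMap _ (Overlap F p β) (algebraMap F _ c) = ψ (algebraMap F _ c)
      rw [hψc]
      exact (algebraMap_F_Overlap F p β c).symm
  · -- H¹
    intro ρL ψL hρ hψL
    set El := (Ea F p β).toLinearEquiv with hEldef
    have hρeq : ρL = (El.symm.toLinearMap).comp
        ((LBl F p β).comp (eYa F p β).toLinearEquiv.toLinearMap) := by
      apply LinearMap.ext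
      intro a
      rw [hρ a]
      show _ = El.symm (LB F p β (eY F p β a))
      rw [← E_algebraMap]
      exact (El.symm_apply_apply _).symm
    have hψeq : ψL = (El.symm.toLinearMap).comp
        (Ψa.toLinearMap.comp (eXa F p β).toLinearEquiv.toLinearMap) := by
      apply LinearMap.ext
      intro a
      rw [hψL a]
      show _ = El.symm (Ψa (eX F p β a))
      rw [hΨa_apply, hΨapply, hψBapply]
      exact (El.symm_apply_apply _).symm
    have hr1 : LinearMap.range ρL
        = Submodule.map El.symm.toLinearMap (Submodule.span F (bB F p β '' Tset p)) := by
      rw [hρeq, LinearMap.range_comp, LinearMap.range_comp, LinearEquiv.range,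
        Submodule.map_top, range_LBl]
    have hr2 : LinearMap.range ψL
        = Submodule.map El.symm.toLinearMap (Submodule.span F (bB F p β '' Sset p)) := by
      rw [hψeq, LinearMap.range_comp, LinearMap.range_comp, LinearEquiv.range,
        Submodule.map_top, range_Psi F p β Ψa hbasis]
    have hsup : LinearMap.range ρL ⊔ LinearMap.range ψL
        = Submodule.map El.symm.toLinearMap (Submodule.span F (bB F p β '' Uset p)) := by
      rw [hr1, hr2, ← Submodule.map_sup, ← Submodule.span_union, ← Set.image_union]
      rfl
    have hq := Submodule.Quotient.equiv (Submodule.span F (bB F p β '' Uset p))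
      (LinearMap.range ρL ⊔ LinearMap.range ψL) El.symm hsup.symm
    have hfr : Module.finrank F (Overlap F p β ⧸
        (LinearMap.range ρL ⊔ LinearMap.range ψL : Submodule F (Overlap F p β)))
        = Fintype.card ((Uset p)ᶜ : Set (ℤ × Fin p)) := by
      rw [← finrank_quotient_U F p β]
      exact hq.symm.finrank_eq
    rw [hfr]
    exact two_mul_card p
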